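/- Let S(m) have (i,j)-entry (-1)^{j-i}·C(m-i,j-i), and let U(m) be the backward identity matrix with (i,j)-entry δ_{i+j,m}. Then the matrix D(m) := S(m)·U(m)·S(m)^{-1} has (i,j)-entry (-1)^{m-i}·C(i,j). -/

import Mathlib

open Finset

lemma keyB : ∀ n m k : ℕ, n ≤ m →
    ∑ j ∈ range (k+1), (-1:ℚ)^j * (n.choose j) * ((m-j).choose (k-j)) = ((m-n).choose k) := by
  intro n
  induction n with
  | zero =>
    intro m k _
    rw [Finset.sum_range_succ']
    simp [Nat.choose_succ_succ]
  | succ n ih =>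
    intro m k hn
    rcases Nat.eq_zero_or_pos k with hk | hk
    · subst hk; simp
    obtain ⟨k, rfl⟩ := Nat.exists_eq_add_of_lt hk
    rw [Nat.zero_add]
    rw [Finset.sum_range_succ']
    have h1 : ∀ t ∈ range (k+1), (-1:ℚ)^(t+1) * ((n+1).choose (t+1)) * ((m-(t+1)).choose (k+1-(t+1)))
        = -((-1:ℚ)^t * (n.choose t) * (((m-1)-t).choose (k-t)))
          + (-1:ℚ)^(t+1) * (n.choose (t+1)) * ((m-(t+1)).choose (k+1-(t+1))) := by
      intro t ht
      rw [Nat.choose_succ_succ]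
      push_cast
      have : m - (t+1) = (m-1) - t := by omega
      rw [this]
      ring
    rw [Finset.sum_congr rfl h1, Finset.sum_add_distrib, Finset.sum_neg_distrib]
    have ih1 := ih (m-1) k (by omega)
    rw [ih1]
    have h2 : ∑ t ∈ range (k+1), (-1:ℚ)^(t+1) * (n.choose (t+1)) * ((m-(t+1)).choose (k+1-(t+1)))
        = (∑ j ∈ range (k+2), (-1:ℚ)^j * (n.choose j) * ((m-j).choose (k+1-j)))
          - (m.choose (k+1)) := by
      rw [Finset.sum_range_succ' (fun j => (-1:ℚ)^j * (n.choose j) * ((m-j).choose (k+1-j))) (k+1)]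
      simp
    rw [h2, ih m (k+1) (by omega)]
    simp only [Nat.sub_zero, pow_zero, Nat.choose_zero_right, Nat.cast_one, one_mul, mul_one]
    have hp : m - n = (m - (n+1)) + 1 := by omega
    rw [hp, Nat.choose_succ_succ]
    have : m - 1 - n = m - (n+1) := by omega
    rw [this]
    push_cast
    ring

lemma altQ (n : ℕ) : ∑ t ∈ range (n+1), (-1:ℚ)^t * (n.choose t) = if n = 0 then 1 else 0 := by
  have h := Int.alternating_sum_range_choose (n := n)
  have : ((∑ i ∈ range (n+1), (-1:ℤ)^i * (n.choose i) : ℤ) : ℚ)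
      = ∑ t ∈ range (n+1), (-1:ℚ)^t * (n.choose t) := by push_cast; rfl
  rw [← this, h]
  split <;> simp

lemma keyA (m i k : ℕ) (hik : i ≤ k) (hk : k ≤ m) :
    ∑ j ∈ range (m+1),
      (if i ≤ j then (-1:ℚ)^(j-i) * ((m-i).choose (j-i)) else 0) *
      (if j ≤ k then (((m-j).choose (k-j)) : ℚ) else 0)
    = if i = k then 1 else 0 := by
  have hsub : Finset.Icc i k ⊆ range (m+1) := by
    intro j hj; simp only [Finset.mem_Icc] at hj; simp; omega
  rw [← Finset.sum_subset hsub (by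
    intro j hj hj2
    simp only [Finset.mem_Icc, not_and_or, not_le] at hj2
    rcases hj2 with h | h
    · rw [if_neg (show ¬ i ≤ j by omega)]; ring
    · rw [if_neg (show ¬ j ≤ k by omega)]; ring)]
  rw [← Finset.Ico_add_one_right_eq_Icc, Finset.sum_Ico_eq_sum_range]
  have h1 : ∀ t ∈ range (k+1-i), (if i ≤ i+t then (-1:ℚ)^(i+t-i) * ((m-i).choose (i+t-i)) else 0) *
      (if i+t ≤ k then (((m-(i+t)).choose (k-(i+t))) : ℚ) else 0)
      = ((m-i).choose (k-i) : ℚ) * ((-1:ℚ)^t * ((k-i).choose t)) := by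
    intro t ht
    simp only [Finset.mem_range] at ht
    rw [if_pos (by omega), if_pos (by omega)]
    have e1 : i + t - i = t := by omega
    have e2 : m - (i+t) = (m-i) - t := by omega
    have e3 : k - (i+t) = (k-i) - t := by omega
    rw [e1, e2, e3]
    have := Nat.choose_mul (n := m-i) (k := k-i) (s := t) (by omega)
    have hcast : ((m-i).choose (k-i) : ℚ) * ((k-i).choose t) = ((m-i).choose t : ℚ) * (((m-i)-t).choose ((k-i)-t)) := by
      exact_mod_cast congrArg (Nat.cast : ℕ → ℚ) this
    linear_combination (-(-1:ℚ)^t) * hcast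
  rw [Finset.sum_congr rfl h1, ← Finset.mul_sum]
  have : k + 1 - i = (k - i) + 1 := by omega
  rw [this, altQ]
  rcases eq_or_lt_of_le hik with h | h
  · subst h; simp
  · rw [if_neg (by omega), if_neg (by omega), mul_zero]

lemma hST (m : ℕ) :
    (Matrix.of fun i j : Fin (m + 1) =>
        if (i : ℕ) ≤ j then (-1 : ℚ) ^ ((j : ℕ) - i) * ((m - i).choose ((j : ℕ) - i)) else 0) *
      (Matrix.of fun i j : Fin (m + 1) =>
        if (i : ℕ) ≤ j then (((m - (i:ℕ)).choose ((j : ℕ) - i)) : ℚ) else 0) = 1 := by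
  ext i k
  rw [Matrix.mul_apply, Matrix.one_apply]
  simp only [Matrix.of_apply]
  rcases le_or_gt (i:ℕ) (k:ℕ) with h | h
  · rw [Fin.sum_univ_eq_sum_range (fun j =>
      (if (i:ℕ) ≤ j then (-1:ℚ)^(j-(i:ℕ)) * ((m-(i:ℕ)).choose (j-(i:ℕ))) else 0) *
      (if j ≤ (k:ℕ) then (((m-j).choose ((k:ℕ)-j)) : ℚ) else 0))]
    rw [keyA m i k h (by omega)]
    congr 1
    simp [Fin.ext_iff]
  · rw [if_neg (by intro hh; subst hh; omega)]
    apply Finset.sum_eq_zero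
    intro j _
    rcases le_or_gt (i:ℕ) (j:ℕ) with h2 | h2
    · rw [if_neg (show ¬ (j:ℕ) ≤ (k:ℕ) by omega)]; ring
    · rw [if_neg (show ¬ (i:ℕ) ≤ (j:ℕ) by omega)]; ring

lemma hSU (m : ℕ) :
    (Matrix.of fun i j : Fin (m + 1) =>
        if (i : ℕ) ≤ j then (-1 : ℚ) ^ ((j : ℕ) - i) * ((m - i).choose ((j : ℕ) - i)) else 0) *
      (Matrix.of fun i j : Fin (m + 1) => if (i : ℕ) + (j : ℕ) = m then (1 : ℚ) else 0) =
    Matrix.of (fun i j : Fin (m+1) =>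
      if (i:ℕ) ≤ m - (j:ℕ) then (-1:ℚ)^((m-(j:ℕ))-(i:ℕ)) * ((m-(i:ℕ)).choose ((m-(j:ℕ))-(i:ℕ))) else 0) := by
  ext i j
  rw [Matrix.mul_apply]
  simp only [Matrix.of_apply]
  rw [Finset.sum_eq_single (⟨m - (j:ℕ), by omega⟩ : Fin (m+1))]
  · rw [if_pos (show ((⟨m - (j:ℕ), by omega⟩ : Fin (m+1)) : ℕ) + (j:ℕ) = m by simp; omega)]
    simp
  · intro b _ hb
    rw [if_neg (show ¬ ((b:ℕ) + (j:ℕ) = m) by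
      intro hh
      apply hb
      apply Fin.ext
      simp
      omega)]
    ring
  · intro hh; exact absurd (Finset.mem_univ _) hh

/-- `D(m) := S(m) · U(m) · S(m)⁻¹` has `(i,j)` entry `(-1)^{m-i} C(i,j)`. -/
theorem D_eq_SUSinv (m : ℕ) :
    (Matrix.of fun i j : Fin (m + 1) =>
        if (i : ℕ) ≤ j then (-1 : ℚ) ^ ((j : ℕ) - i) * ((m - i).choose ((j : ℕ) - i)) else 0) *
      (Matrix.of fun i j : Fin (m + 1) => if (i : ℕ) + (j : ℕ) = m then (1 : ℚ) else 0) *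
      (Matrix.of fun i j : Fin (m + 1) =>
        if (i : ℕ) ≤ j then (-1 : ℚ) ^ ((j : ℕ) - i) *
          ((m - i).choose ((j : ℕ) - i)) else 0)⁻¹ =
    Matrix.of fun i j : Fin (m + 1) =>
      (-1 : ℚ) ^ (m - (i : ℕ)) * ((i : ℕ).choose (j : ℕ)) := by
  rw [Matrix.inv_eq_right_inv (hST m), hSU m]
  ext i k
  rw [Matrix.mul_apply]
  simp only [Matrix.of_apply]
  rw [Fin.sum_univ_eq_sum_range (fun j =>
    (if (i:ℕ) ≤ m - j then (-1:ℚ)^((m-j)-(i:ℕ)) * ((m-(i:ℕ)).choose ((m-j)-(i:ℕ))) else 0) *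
    (if j ≤ (k:ℕ) then (((m-j).choose ((k:ℕ)-j)) : ℚ) else 0))]
  have hsub : range ((k:ℕ)+1) ⊆ range (m+1) := by
    intro x; simp only [mem_range]; omega
  rw [← Finset.sum_subset hsub (by
    intro j hj hj2
    simp only [mem_range] at hj hj2
    rw [if_neg (show ¬ j ≤ (k:ℕ) by omega)]
    ring)]
  have hcongr : ∀ j ∈ range ((k:ℕ)+1),
      (if (i:ℕ) ≤ m - j then (-1:ℚ)^((m-j)-(i:ℕ)) * ((m-(i:ℕ)).choose ((m-j)-(i:ℕ))) else 0) *
      (if j ≤ (k:ℕ) then (((m-j).choose ((k:ℕ)-j)) : ℚ) else 0)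
      = (-1:ℚ)^(m-(i:ℕ)) * ((-1:ℚ)^j * ((m-(i:ℕ)).choose j) * ((m-j).choose ((k:ℕ)-j))) := by
    intro j hj
    simp only [mem_range] at hj
    rw [if_pos (show j ≤ (k:ℕ) by omega)]
    rcases le_or_gt ((i:ℕ)) (m - j) with h2 | h2
    · rw [if_pos h2]
      have hj2 : j ≤ m - (i:ℕ) := by omega
      have e1 : (m-j) - (i:ℕ) = (m-(i:ℕ)) - j := by omega
      rw [e1, Nat.choose_symm hj2]
      have hs : (-1:ℚ)^((m-(i:ℕ))-j) * (-1:ℚ)^j = (-1:ℚ)^(m-(i:ℕ)) := by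
        rw [← pow_add]; congr 1; omega
      have hsq : (-1:ℚ)^j * (-1:ℚ)^j = 1 := by
        rw [← mul_pow]; norm_num
      linear_combination ((-1:ℚ)^j * (((m-(i:ℕ)).choose j):ℚ) * (((m-j).choose ((k:ℕ)-j)):ℚ)) * hs
        - ((-1:ℚ)^((m-(i:ℕ))-j) * (((m-(i:ℕ)).choose j):ℚ) * (((m-j).choose ((k:ℕ)-j)):ℚ)) * hsq
    · rw [if_neg (by omega)]
      have : (m-(i:ℕ)).choose j = 0 := Nat.choose_eq_zero_of_lt (by omega)
      rw [this]
      push_cast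
      ring
  rw [Finset.sum_congr rfl hcongr, ← Finset.mul_sum]
  have hkb := keyB (m - (i:ℕ)) m (k:ℕ) (by omega)
  rw [show ∑ j ∈ range ((k:ℕ)+1), ((-1:ℚ)^j * ((m-(i:ℕ)).choose j) * ((m-j).choose ((k:ℕ)-j)))
    = ((m-(m-(i:ℕ))).choose (k:ℕ) : ℚ) from hkb]
  rw [show m - (m - (i:ℕ)) = (i:ℕ) from by omega]
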